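/- Let E be a finite-dimensional real inner product space (the parameter space), Z a real normed vector space (the data space), n ≥ 1, γ > 0, and let z, z' : Fin n → Z be the points of datasets D₁ and D₂ with averaged Hungarian distance d(D₁, D₂) = min over permutations π of (1/n)·Σ_i ‖z(i) − z'(π(i))‖. Let ℓ : E → Z → ℝ and define the regularized empirical losses L_{D}(θ) = (1/n)·Σ_i ℓ(θ, z_i) + γ‖θ‖² for each dataset D. Suppose: (i) z ↦ ℓ(θ₁, z) is Lipschitz with constant L ≥ 0; (ii) θ₁ is a global minimizer of L_{D₁} and θ₂ is a global minimizer of L_{D₂}; (iii) L_{D₂} admits the exact expansion L_{D₂}(θ₁) = L_{D₂}(θ₂) + (1/2)·⟨θ₁ − θ₂, H(θ₁ − θ₂)⟩ with H symmetric and ⟨v, Hv⟩ ≥ 2γ‖v‖² for all v; and (iv) L_{D₁}(θ₁) ≥ L_{D₂}(θ₂). Then ‖θ₂ − θ₁‖ ≤ sqrt( L · d(D₁, D₂) / γ ) + sqrt( (L_{D₁}(θ₁) − L_{D₂}(θ₂)) / γ ). -/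

import Mathlib

/-- Theorem 1 of the paper: bound on the parameter shift between the global
minimizers of weight-decay-regularized empirical losses on two datasets, in terms of the
loss's data-Lipschitz constant, the Hungarian distance between the datasets, and the
weight-decay coefficient `γ`. -/
theorem parameter_shift_bound {E : Type*} [NormedAddCommGroup E] [InnerProductSpace ℝ E]
    [FiniteDimensional ℝ E] {Z : Type*} [NormedAddCommGroup Z] [NormedSpace ℝ Z]
    (n : ℕ) (hn : 1 ≤ n) (γ : ℝ) (hγ : 0 < γ) (z z' : Fin n → Z)
    (ℓ : E → Z → ℝ) (L : ℝ) (hL : 0 ≤ L)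
    (θ₁ θ₂ : E)
    -- the regularized empirical losses on the two datasets
    (L₁ L₂ : E → ℝ)
    (hL₁ : ∀ θ : E, L₁ θ = (1 / (n : ℝ)) * ∑ i, ℓ θ (z i) + γ * ‖θ‖ ^ 2)
    (hL₂ : ∀ θ : E, L₂ θ = (1 / (n : ℝ)) * ∑ i, ℓ θ (z' i) + γ * ‖θ‖ ^ 2)
    -- (i) data-Lipschitzness of the loss at θ₁
    (hLip : ∀ a b : Z, |ℓ θ₁ a - ℓ θ₁ b| ≤ L * ‖a - b‖)
    -- (ii) global optimality
    (hopt₁ : ∀ θ : E, L₁ θ₁ ≤ L₁ θ)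
    (hopt₂ : ∀ θ : E, L₂ θ₂ ≤ L₂ θ)
    -- (iii) exact locally quadratic expansion of L₂ around θ₂
    (H : E →ₗ[ℝ] E)
    (hsym : ∀ u v : E, (inner ℝ (H u) v : ℝ) = inner ℝ u (H v))
    (hpos : ∀ v : E, (inner ℝ v (H v) : ℝ) ≥ 2 * γ * ‖v‖ ^ 2)
    (hexp : L₂ θ₁ = L₂ θ₂ + (1 / 2) * (inner ℝ (θ₁ - θ₂) (H (θ₁ - θ₂)) : ℝ))
    -- (iv) the optimal values are ordered
    (hord : L₁ θ₁ ≥ L₂ θ₂) :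
    ‖θ₂ - θ₁‖ ≤
      Real.sqrt (L * (⨅ π : Equiv.Perm (Fin n),
          (1 / (n : ℝ)) * ∑ i, ‖z i - z' (π i)‖) / γ) +
        Real.sqrt ((L₁ θ₁ - L₂ θ₂) / γ) := by
  set f : Equiv.Perm (Fin n) → ℝ := fun π => (1 / (n : ℝ)) * ∑ i, ‖z i - z' (π i)‖ with hf
  have hnpos : (0 : ℝ) < n := by exact_mod_cast hn
  have hfnn : ∀ π, 0 ≤ f π := fun π => by
    apply mul_nonneg (by positivity)
    exact Finset.sum_nonneg fun i _ => norm_nonneg _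
  -- the infimum is attained
  obtain ⟨π₀, hπ₀⟩ := Finite.exists_min f
  have hinf : (⨅ π : Equiv.Perm (Fin n), f π) = f π₀ := by
    apply le_antisymm
    · exact ciInf_le ⟨0, fun x ⟨π, hπ⟩ => hπ ▸ hfnn π⟩ π₀
    · exact le_ciInf hπ₀
  set v : E := θ₁ - θ₂ with hv
  -- strong growth: γ‖v‖² ≤ L₂ θ₁ - L₂ θ₂
  have h1 : γ * ‖v‖ ^ 2 ≤ L₂ θ₁ - L₂ θ₂ := by
    have := hpos v
    rw [hexp]; linarith
  -- comparison of losses via Lipschitzness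
  have h2 : L₂ θ₁ ≤ L₁ θ₁ + L * f π₀ := by
    rw [hL₁ θ₁, hL₂ θ₁]
    have hsum : ∑ i, ℓ θ₁ (z' i) = ∑ i, ℓ θ₁ (z' (π₀ i)) :=
      (Equiv.sum_comp π₀ (fun i => ℓ θ₁ (z' i))).symm
    have hterm : ∑ i, ℓ θ₁ (z' (π₀ i)) ≤ ∑ i, (ℓ θ₁ (z i) + L * ‖z i - z' (π₀ i)‖) := by
      apply Finset.sum_le_sum
      intro i _
      have := hLip (z' (π₀ i)) (z i)
      have habs := abs_le.mp this |>.2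
      rw [← norm_sub_rev]
      linarith
    rw [hsum, Finset.sum_add_distrib] at *
    have : (1 / (n : ℝ)) * ∑ i, ℓ θ₁ (z' (π₀ i)) ≤
        (1 / (n : ℝ)) * (∑ i, ℓ θ₁ (z i) + ∑ i, L * ‖z i - z' (π₀ i)‖) := by
      apply mul_le_mul_of_nonneg_left hterm (by positivity)
    have hLf : (1 / (n : ℝ)) * ∑ i, L * ‖z i - z' (π₀ i)‖ = L * f π₀ := by
      rw [hf, ← Finset.mul_sum]; ring
    rw [mul_add, hLf] at this
    linarith
  -- combine
  have h3 : ‖v‖ ^ 2 ≤ L * f π₀ / γ + (L₁ θ₁ - L₂ θ₂) / γ := by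
    rw [← add_div, le_div_iff₀ hγ]
    nlinarith
  have hA : 0 ≤ L * f π₀ / γ := by positivity
  have hB : 0 ≤ (L₁ θ₁ - L₂ θ₂) / γ := by
    apply div_nonneg _ hγ.le; linarith
  have hnorm : ‖θ₂ - θ₁‖ = ‖v‖ := by rw [hv, norm_sub_rev]
  rw [hnorm, hinf]
  calc ‖v‖ = Real.sqrt (‖v‖ ^ 2) := by
        rw [Real.sqrt_sq (norm_nonneg _)]
    _ ≤ Real.sqrt (L * f π₀ / γ + (L₁ θ₁ - L₂ θ₂) / γ) := Real.sqrt_le_sqrt h3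
    _ ≤ Real.sqrt (L * f π₀ / γ) + Real.sqrt ((L₁ θ₁ - L₂ θ₂) / γ) := by
        set a := L * f π₀ / γ
        set b := (L₁ θ₁ - L₂ θ₂) / γ
        have h1 := Real.sq_sqrt hA
        have h2 := Real.sq_sqrt hB
        have h3 := Real.sqrt_nonneg a
        have h4 := Real.sqrt_nonneg b
        have : a + b ≤ (Real.sqrt a + Real.sqrt b) ^ 2 := by nlinarith
        calc Real.sqrt (a + b) ≤ Real.sqrt ((Real.sqrt a + Real.sqrt b) ^ 2) :=
              Real.sqrt_le_sqrt this
          _ = Real.sqrt a + Real.sqrt b := Real.sqrt_sq (by linarith)
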